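/- Suppose Z ≅ Λ_Z/Q∨ is cyclic of order k, where Q∨ ⊆ Λ_Z ⊆ P∨. There exists a skew-symmetric ℤ-bilinear form ω: Λ_Z × Λ_Z → 𝕋 with ω(α,μ) = (−1)^{⟨α,μ⟩} for all α ∈ Q∨, μ ∈ Λ_Z, if and only if k⟨λ,λ⟩ ∈ 2ℤ for a generator λ of Λ_Z/Q∨. -/

import Mathlib

open scoped RealInnerProductSpace

/-- A level ℓ compatible commutator map on the lattice Λ (relative to the pairing B and
the coroot lattice Q): a bi-multiplicative, skew-symmetric map into the unit circle
satisfying `ω(α,μ) = (-1)^(ℓ⟨α,μ⟩)` whenever α lies in Q. -/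
def IsCommutatorForm {V : Type*} [AddCommGroup V] (B : V → V → ℝ) (Q Λ : Set V)
    (ℓ : ℕ) (ω : V → V → ℂ) : Prop :=
  (∀ a ∈ Λ, ∀ b ∈ Λ, ‖ω a b‖ = 1) ∧
  (∀ a ∈ Λ, ∀ b ∈ Λ, ∀ c ∈ Λ, ω (a + b) c = ω a c * ω b c) ∧
  (∀ a ∈ Λ, ∀ b ∈ Λ, ∀ c ∈ Λ, ω a (b + c) = ω a b * ω a c) ∧
  (∀ a ∈ Λ, ∀ b ∈ Λ, ω a b * ω b a = 1) ∧
  (∀ a ∈ Λ, ω a a = 1) ∧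
  (∀ α ∈ Q, α ∈ Λ → ∀ μ ∈ Λ, ∀ z : ℤ, B α μ = (z : ℝ) →
    ω α μ = (-1 : ℂ) ^ ((ℓ : ℤ) * z))

/-- Suppose `Z ≅ Λ_Z/Q∨` is cyclic of order k, with `Q∨ ⊆ Λ_Z ⊆ P∨`.
There exists a skew-symmetric ℤ-bilinear form `ω : Λ_Z × Λ_Z → 𝕋` with
`ω(α,μ) = (-1)^⟨α,μ⟩` for all `α ∈ Q∨`, `μ ∈ Λ_Z`, if and only if `k⟨λ,λ⟩ ∈ 2ℤ`
for a generator λ of `Λ_Z/Q∨`. -/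
theorem cyclic_commutator_form_exists_iff
    {V : Type*} [NormedAddCommGroup V] [InnerProductSpace ℝ V]
    (Qv Λ : Submodule ℤ V) (hQΛ : Qv ≤ Λ)
    (hpair : ∀ a ∈ Qv, ∀ b ∈ Λ, ∃ z : ℤ, ⟪a, b⟫ = (z : ℝ))
    (heven : ∀ a ∈ Qv, ∃ z : ℤ, ⟪a, a⟫ = 2 * (z : ℝ))
    (k : ℕ) (hk : 1 ≤ k) (l : V) (hl : l ∈ Λ)
    (hgen : ∀ μ ∈ Λ, ∃ j : ℤ, μ - j • l ∈ Qv)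
    (hkl : (k : ℤ) • l ∈ Qv)
    (horder : ∀ j : ℤ, j • l ∈ Qv → (k : ℤ) ∣ j) :
    (∃ ω : V → V → ℂ,
        IsCommutatorForm (fun a b => ⟪a, b⟫) (Qv : Set V) (Λ : Set V) 1 ω) ↔
      ∃ z : ℤ, (k : ℝ) * ⟪l, l⟫ = 2 * (z : ℝ) := by
  classical
  have hneg : (-1 : ℂ) ≠ 0 := by norm_num
  have key : ∀ p q : ℤ, (∃ t : ℤ, p = q + 2 * t) → (-1 : ℂ) ^ p = (-1) ^ q := by
    rintro p q ⟨t, rfl⟩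
    rw [zpow_add₀ hneg, zpow_mul]
    norm_num
  constructor
  · rintro ⟨ω, habs, haddl, haddr, hskew, hdiag, hQ⟩
    obtain ⟨z, hz⟩ := hpair _ hkl l hl
    have hzl : (k : ℝ) * ⟪l, l⟫ = (z : ℝ) := by
      rw [← hz, ← Int.cast_smul_eq_zsmul ℝ, real_inner_smul_left]
      push_cast; ring
    have h0Λ : (0 : V) ∈ (Λ : Set V) := Λ.zero_mem
    have hsm : ∀ n : ℤ, n • l ∈ (Λ : Set V) := fun n => Λ.smul_mem n hl
    have hne : ω 0 l ≠ 0 := by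
      intro h
      have := habs 0 h0Λ l hl
      rw [h] at this
      simp at this
    have h0 : ω 0 l = 1 := by
      have h00 := haddl 0 h0Λ 0 h0Λ l hl
      rw [add_zero] at h00
      have := mul_left_cancel₀ hne (by rw [← h00, mul_one] :
        ω 0 l * 1 = ω 0 l * ω 0 l)
      exact this.symm
    have hωll : ω l l = 1 := hdiag l hl
    have hn : ∀ n : ℕ, ω ((n : ℤ) • l) l = 1 := by
      intro n
      induction n with
      | zero => simpa using h0
      | succ n ih =>
        have heq : ((n + 1 : ℕ) : ℤ) • l = (n : ℤ) • l + l := by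
          push_cast; rw [add_smul, one_smul]
        have hadd := haddl ((n : ℤ) • l) (hsm _) l hl l hl
        rw [heq, hadd, ih, hωll, one_mul]
    have h1 : ω ((k : ℤ) • l) l = (-1 : ℂ) ^ ((1 : ℤ) * z) :=
      hQ _ hkl (hsm _) l hl z hz
    have h2 : (-1 : ℂ) ^ z = 1 := by
      rw [one_mul] at h1
      rw [← h1]
      exact hn k
    rcases Int.even_or_odd z with he | ho
    · obtain ⟨m, hm⟩ := he
      exact ⟨m, by rw [hzl, hm]; push_cast; ring⟩
    · exfalso
      rw [ho.neg_one_zpow] at h2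
      norm_num at h2
  · rintro ⟨z₀, hz₀⟩
    set J : V → ℤ := fun v => if h : ∃ j : ℤ, v - j • l ∈ Qv then h.choose else 0
      with hJdef
    have hJ : ∀ v ∈ Λ, v - (J v) • l ∈ Qv := by
      intro v hv
      have h : ∃ j : ℤ, v - j • l ∈ Qv := hgen v hv
      simp only [hJdef, dif_pos h]
      exact h.choose_spec
    set E : V → V → ℤ := fun a b =>
      if h : ∃ z : ℤ, ⟪a, b⟫ - (J a : ℝ) * (J b : ℝ) * ⟪l, l⟫ = (z : ℝ)
      then h.choose else 0 with hEdef
    have hEex : ∀ a ∈ Λ, ∀ b ∈ Λ,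
        ∃ z : ℤ, ⟪a, b⟫ - (J a : ℝ) * (J b : ℝ) * ⟪l, l⟫ = (z : ℝ) := by
      intro a ha b hb
      obtain ⟨z₁, h₁⟩ := hpair _ (hJ a ha) b hb
      obtain ⟨z₂, h₂⟩ := hpair _ (hJ b hb) l hl
      refine ⟨z₁ + J a * z₂, ?_⟩
      rw [← Int.cast_smul_eq_zsmul ℝ, inner_sub_left, real_inner_smul_left] at h₁
      rw [← Int.cast_smul_eq_zsmul ℝ, inner_sub_left, real_inner_smul_left] at h₂
      have hc2 := real_inner_comm l b
      push_cast
      linear_combination h₁ + (J a : ℝ) * h₂ - (J a : ℝ) * hc2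
    have hE : ∀ a ∈ Λ, ∀ b ∈ Λ,
        (E a b : ℝ) = ⟪a, b⟫ - (J a : ℝ) * (J b : ℝ) * ⟪l, l⟫ := by
      intro a ha b hb
      have h := hEex a ha b hb
      simp only [hEdef, dif_pos h]
      exact h.choose_spec.symm
    refine ⟨fun a b => (-1 : ℂ) ^ (E a b), ?_, ?_, ?_, ?_, ?_, ?_⟩
    · intro a _ b _
      rw [norm_zpow]
      simp
    · intro a ha b hb c hc
      have habΛ : a + b ∈ Λ := Λ.add_mem ha hb
      have q3 : (J a + J b - J (a + b)) • l ∈ Qv := by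
        have hsub := Qv.sub_mem (hJ _ habΛ) (Qv.add_mem (hJ a ha) (hJ b hb))
        have : (a + b) - (J (a + b)) • l - ((a - J a • l) + (b - J b • l))
            = (J a + J b - J (a + b)) • l := by
          rw [sub_smul, add_smul]; abel
        rwa [this] at hsub
      obtain ⟨m, hm⟩ := horder _ q3
      show (-1 : ℂ) ^ (E (a + b) c) = (-1) ^ (E a c) * (-1) ^ (E b c)
      rw [← zpow_add₀ hneg]
      apply key
      refine ⟨m * J c * z₀, ?_⟩
      have r1 := hE (a + b) habΛ c hc
      have r2 := hE a ha c hc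
      have r3 := hE b hb c hc
      have r4 : ⟪a + b, c⟫ = ⟪a, c⟫ + ⟪b, c⟫ := inner_add_left a b c
      have hm' : ((J a : ℝ) + J b - J (a + b)) = (k : ℝ) * m := by exact_mod_cast hm
      have hreal : ((E (a + b) c : ℝ)) = (E a c : ℝ) + (E b c : ℝ)
          + 2 * ((m : ℝ) * (J c : ℝ) * (z₀ : ℝ)) := by
        linear_combination r1 - r2 - r3 + r4 + ((J c : ℝ) * ⟪l, l⟫) * hm'
          + ((J c : ℝ) * (m : ℝ)) * hz₀
      exact_mod_cast hreal
    · intro a ha b hb c hc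
      have hbcΛ : b + c ∈ Λ := Λ.add_mem hb hc
      have q3 : (J b + J c - J (b + c)) • l ∈ Qv := by
        have hsub := Qv.sub_mem (hJ _ hbcΛ) (Qv.add_mem (hJ b hb) (hJ c hc))
        have : (b + c) - (J (b + c)) • l - ((b - J b • l) + (c - J c • l))
            = (J b + J c - J (b + c)) • l := by
          rw [sub_smul, add_smul]; abel
        rwa [this] at hsub
      obtain ⟨m, hm⟩ := horder _ q3
      show (-1 : ℂ) ^ (E a (b + c)) = (-1) ^ (E a b) * (-1) ^ (E a c)
      rw [← zpow_add₀ hneg]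
      apply key
      refine ⟨m * J a * z₀, ?_⟩
      have r1 := hE a ha (b + c) hbcΛ
      have r2 := hE a ha b hb
      have r3 := hE a ha c hc
      have r4 : ⟪a, b + c⟫ = ⟪a, b⟫ + ⟪a, c⟫ := inner_add_right a b c
      have hm' : ((J b : ℝ) + J c - J (b + c)) = (k : ℝ) * m := by exact_mod_cast hm
      have hreal : ((E a (b + c) : ℝ)) = (E a b : ℝ) + (E a c : ℝ)
          + 2 * ((m : ℝ) * (J a : ℝ) * (z₀ : ℝ)) := by
        linear_combination r1 - r2 - r3 + r4 + ((J a : ℝ) * ⟪l, l⟫) * hm'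
          + ((J a : ℝ) * (m : ℝ)) * hz₀
      exact_mod_cast hreal
    · intro a ha b hb
      show (-1 : ℂ) ^ (E a b) * (-1) ^ (E b a) = 1
      rw [← zpow_add₀ hneg, show (1 : ℂ) = (-1 : ℂ) ^ (0 : ℤ) from (zpow_zero _).symm]
      apply key
      refine ⟨E a b, ?_⟩
      have r1 := hE a ha b hb
      have r2 := hE b hb a ha
      have rc := real_inner_comm a b
      have hreal : ((E a b : ℝ)) + (E b a : ℝ) = 0 + 2 * (E a b : ℝ) := by
        linear_combination r2 - r1 + rc
      exact_mod_cast hreal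
    · intro a ha
      show (-1 : ℂ) ^ (E a a) = 1
      rw [show (1 : ℂ) = (-1 : ℂ) ^ (0 : ℤ) from (zpow_zero _).symm]
      apply key
      obtain ⟨z₁, h₁⟩ := heven _ (hJ a ha)
      obtain ⟨z₂, h₂⟩ := hpair _ (hJ a ha) l hl
      refine ⟨z₁ + J a * z₂, ?_⟩
      rw [← Int.cast_smul_eq_zsmul ℝ] at h₁ h₂
      rw [inner_sub_left, inner_sub_right, inner_sub_right, real_inner_smul_left,
        real_inner_smul_left, real_inner_smul_right, real_inner_smul_right] at h₁
      rw [inner_sub_left, real_inner_smul_left] at h₂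
      have rc := real_inner_comm a l
      have r1 := hE a ha a ha
      have hreal : ((E a a : ℝ)) = 0 + 2 * ((z₁ : ℝ) + (J a : ℝ) * (z₂ : ℝ)) := by
        linear_combination r1 + h₁ + 2 * (J a : ℝ) * h₂ + (J a : ℝ) * rc
      exact_mod_cast hreal
    · intro α hαQ hαΛ μ hμ z hz
      have hJα : (J α) • l ∈ Qv := by
        have hsub := Qv.sub_mem hαQ (hJ α hαΛ)
        rwa [sub_sub_cancel] at hsub
      obtain ⟨m, hm⟩ := horder _ hJα
      show (-1 : ℂ) ^ (E α μ) = (-1) ^ ((1 : ℤ) * z)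
      apply key
      refine ⟨-(m * J μ * z₀), ?_⟩
      have r1 := hE α hαΛ μ hμ
      have hm' : ((J α : ℝ)) = (k : ℝ) * m := by exact_mod_cast hm
      have hreal : ((E α μ : ℝ)) = (1 : ℝ) * (z : ℝ)
          + 2 * (-((m : ℝ) * (J μ : ℝ) * (z₀ : ℝ))) := by
        linear_combination r1 + hz - ((J μ : ℝ) * ⟪l, l⟫) * hm'
          - ((J μ : ℝ) * (m : ℝ)) * hz₀
      exact_mod_cast hreal
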